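/- The sum ∑_{k=2}^∞ (ζ(k) − 1) equals 1, where ζ is the Riemann zeta function (Shallit–Zikan theorem). -/

import Mathlib

open Complex Filter Topology

lemma geo_aux (n : ℕ) :
    HasSum (fun k : ℕ => (1 / ((n : ℝ) + 2)) ^ (k + 2)) (1 / (((n : ℝ) + 1) * ((n : ℝ) + 2))) := by
  have h2 : (0:ℝ) < (n : ℝ) + 2 := by positivity
  have hr0 : (0:ℝ) ≤ 1 / ((n : ℝ) + 2) := by positivity
  have hr1 : 1 / ((n : ℝ) + 2) < 1 := by
    rw [div_lt_one h2]; linarith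
  have := (hasSum_geometric_of_lt_one hr0 hr1).mul_left ((1 / ((n : ℝ) + 2)) ^ 2)
  have heq : (1 / ((n : ℝ) + 2)) ^ 2 * (1 - 1 / ((n : ℝ) + 2))⁻¹
      = 1 / (((n : ℝ) + 1) * ((n : ℝ) + 2)) := by
    have h1 : (0:ℝ) < (n : ℝ) + 1 := by positivity
    have hpos : (0:ℝ) < 1 - 1 / ((n : ℝ) + 2) := by linarith
    have h3 : (1:ℝ) - 1 / ((n : ℝ) + 2) = ((n : ℝ) + 1) / ((n : ℝ) + 2) := by
      rw [eq_div_iff h2.ne']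
      field_simp
      ring
    rw [h3, inv_div, div_pow, one_pow]
    rw [div_mul_div_comm, one_mul, div_eq_div_iff (by positivity) (by positivity)]
    ring
  rw [heq] at this
  convert this using 2 with k
  case e'_3 => rfl
  rw [pow_add]
  ring

lemma telescope_aux : HasSum (fun n : ℕ => 1 / (((n : ℝ) + 1) * ((n : ℝ) + 2))) 1 := by
  rw [hasSum_iff_tendsto_nat_of_nonneg (fun n => by positivity)]
  have hpart : ∀ N : ℕ, ∑ i ∈ Finset.range N, 1 / (((i : ℝ) + 1) * ((i : ℝ) + 2))
      = 1 - 1 / ((N : ℝ) + 1) := by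
    intro N
    have key : ∀ i : ℕ, 1 / (((i : ℝ) + 1) * ((i : ℝ) + 2))
        = 1 / ((i : ℝ) + 1) - 1 / (((i + 1 : ℕ) : ℝ) + 1) := by
      intro i
      push_cast
      have h1 : (0:ℝ) < (i : ℝ) + 1 := by positivity
      have h2 : (0:ℝ) < (i : ℝ) + 2 := by positivity
      rw [div_sub_div _ _ h1.ne' (by linarith : ((i:ℝ) + 1 + 1) ≠ 0)]
      rw [div_eq_div_iff (by positivity) (by positivity)]
      ring
    simp_rw [key]
    rw [Finset.sum_range_sub' (fun i : ℕ => 1 / ((i : ℝ) + 1))]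
    norm_num
  simp_rw [hpart]
  have h0 : Tendsto (fun N : ℕ => 1 / ((N : ℝ) + 1)) atTop (𝓝 0) :=
    tendsto_one_div_add_atTop_nhds_zero_nat
  simpa using (tendsto_const_nhds.sub h0)

lemma zeta_term_aux (k : ℕ) :
    riemannZeta ((k : ℂ) + 2) - 1 = ((∑' n : ℕ, (1 / ((n : ℝ) + 2)) ^ (k + 2) : ℝ) : ℂ) := by
  have hcast : ((k : ℂ) + 2) = ((k + 2 : ℕ) : ℂ) := by push_cast; ring
  have hz := zeta_nat_eq_tsum_of_gt_one (k := k + 2) (by omega)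
  rw [hcast, hz]
  have hsum : Summable fun n : ℕ => 1 / (n : ℂ) ^ (k + 2) := by
    apply Summable.of_norm
    have h : Summable fun n : ℕ => 1 / (n : ℝ) ^ (k + 2) :=
      Real.summable_one_div_nat_pow.mpr (by omega)
    apply h.congr
    intro n
    simp [norm_div, norm_pow]
  rw [← Summable.sum_add_tsum_nat_add 2 hsum]
  rw [Finset.sum_range_succ, Finset.sum_range_one]
  simp only [Nat.cast_zero, Nat.cast_one]
  rw [zero_pow (by omega : k + 2 ≠ 0), div_zero, one_pow]
  rw [Complex.ofReal_tsum]
  have : ∀ n : ℕ, 1 / (((n + 2 : ℕ) : ℂ)) ^ (k + 2)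
      = (((1 / ((n : ℝ) + 2)) ^ (k + 2) : ℝ) : ℂ) := by
    intro n
    push_cast
    rw [div_pow, one_pow]
  simp_rw [this]
  ring

lemma real_main :
    ∑' k : ℕ, ∑' n : ℕ, (1 / ((n : ℝ) + 2)) ^ (k + 2) = 1 := by
  have hf : Summable (Function.uncurry fun n k : ℕ => (1 / ((n : ℝ) + 2)) ^ (k + 2)) := by
    rw [summable_prod_of_nonneg (fun p => by
      obtain ⟨a, b⟩ := p
      simp only [Function.uncurry]
      positivity)]
    refine ⟨fun n => (geo_aux n).summable, ?_⟩
    apply telescope_aux.summable.congr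
    intro n
    exact ((geo_aux n).tsum_eq).symm
  calc ∑' (k : ℕ), ∑' (n : ℕ), (1 / ((n : ℝ) + 2)) ^ (k + 2)
      = ∑' (n : ℕ), ∑' (k : ℕ), (1 / ((n : ℝ) + 2)) ^ (k + 2) :=
        Summable.tsum_comm (f := fun n k : ℕ => (1 / ((n : ℝ) + 2)) ^ (k + 2)) hf
    _ = ∑' n : ℕ, 1 / (((n : ℝ) + 1) * ((n : ℝ) + 2)) := by
        exact tsum_congr fun n => (geo_aux n).tsum_eq
    _ = 1 := telescope_aux.tsum_eq

theorem shallit_zikan :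
    ∑' k : ℕ, (riemannZeta ((k : ℂ) + 2) - 1) = 1 := by
  simp_rw [zeta_term_aux]
  rw [← Complex.ofReal_tsum, real_main, Complex.ofReal_one]
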